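/- If student i is assigned under DA to a school s = DA_i(P) that never rejects any applicant during the execution of the student-proposing Deferred Acceptance algorithm, then i is unimprovable: every stable-dominating matching ν satisfies ν(i) = s. -/

import Mathlib

/-!
A school choice problem: finitely many students `I` and schools `S`
(with a distinguished null school of quota `|I|`).  Each student `i` has a
strict preference over schools represented by its rank function
`rk i : S → ℕ` (a bijection onto `{1, …, |S|}`, where rank 1 is the most
preferred school); each school `s` has a quota `quota s ≥ 1` and a strict
priority over students represented by `prio s : I → ℕ`
(`i ▷_s j` iff `prio s i < prio s j`).
-/
structure SchoolChoice (I S : Type) [Fintype I] [Fintype S]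
    [DecidableEq I] [DecidableEq S] where
  nullSchool : S
  quota : S → ℕ
  rk : I → S → ℕ
  prio : S → I → ℕ
  quota_pos : ∀ s : S, 1 ≤ quota s
  quota_null : quota nullSchool = Fintype.card I
  rk_inj : ∀ i : I, Function.Injective (rk i)
  rk_mem : ∀ (i : I) (s : S), rk i s ∈ Finset.Icc 1 (Fintype.card S)
  prio_inj : ∀ s : S, Function.Injective (prio s)

namespace SchoolChoice

open scoped Classical

variable {I S : Type} [Fintype I] [Fintype S] [DecidableEq I] [DecidableEq S]

/-- `μ` is a matching: no school is assigned more students than its quota. -/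
def IsMatching (P : SchoolChoice I S) (μ : I → S) : Prop :=
  ∀ s : S, (Finset.univ.filter fun i => μ i = s).card ≤ P.quota s

/-- Given the sets `R i` of schools that have rejected student `i` so far,
student `i` proposes to her most preferred school that has not rejected her. -/
noncomputable def propose (P : SchoolChoice I S) (R : I → Finset S) (i : I) : S :=
  if h : (Finset.univ \ R i).Nonempty then
    (Finset.exists_min_image (Finset.univ \ R i) (P.rk i) h).choose
  else P.nullSchool

/-- At the DA round with rejection state `R`, school `s` rejects student `i`:
`i` applies to `s` and at least `quota s` applicants to `s` have higher priority. -/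
def rejectsAt (P : SchoolChoice I S) (R : I → Finset S) (s : S) (i : I) : Prop :=
  P.propose R i = s ∧
    P.quota s ≤ (Finset.univ.filter fun j =>
      P.propose R j = s ∧ P.prio s j < P.prio s i).card

/-- One round of student-proposing Deferred Acceptance: record new rejections. -/
noncomputable def stepR (P : SchoolChoice I S) (R : I → Finset S) : I → Finset S :=
  fun i => R i ∪ (Finset.univ.filter fun s => P.rejectsAt R s i)

/-- Rejection state after `n` rounds of Deferred Acceptance. -/
noncomputable def daR (P : SchoolChoice I S) : ℕ → I → Finset S
  | 0 => fun _ => (∅ : Finset S)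
  | n + 1 => P.stepR (P.daR n)

/-- The outcome of the student-proposing Deferred Acceptance algorithm:
iterate rounds until no rejection occurs (which happens within
`|I|·|S| + 1` rounds); each student is matched to the school holding her. -/
noncomputable def DA (P : SchoolChoice I S) : I → S :=
  P.propose (P.daR (Fintype.card I * Fintype.card S + 1))

/-- A matching `ν` is stable-dominating if every student weakly prefers
`ν` to the DA outcome. -/
def StableDominating (P : SchoolChoice I S) (ν : I → S) : Prop :=
  P.IsMatching ν ∧ ∀ i : I, P.rk i (ν i) ≤ P.rk i (P.DA i)

/-- Student `i` is unimprovable: every stable-dominating matching assigns `i`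
to her DA school. -/
def Unimprovable (P : SchoolChoice I S) (i : I) : Prop :=
  ∀ ν : I → S, P.StableDominating ν → ν i = P.DA i

/-- Edge of the envy digraph `G^DA(P)`: `i` prefers `j`'s DA school to her own. -/
def Envy (P : SchoolChoice I S) (i j : I) : Prop :=
  P.rk i (P.DA j) < P.rk i (P.DA i)

/-- Student `i` lies on a directed cycle of the envy digraph `G^DA(P)`. -/
def OnCycle (P : SchoolChoice I S) (i : I) : Prop :=
  ∃ (m : ℕ) (c : ℕ → I), 0 < m ∧ c 0 = i ∧ c m = i ∧
    ∀ k < m, P.Envy (c k) (c (k + 1))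

/-- Student `i` desires school `s` in matching `μ`. -/
def Desires (P : SchoolChoice I S) (μ : I → S) (i : I) (s : S) : Prop :=
  P.rk i s < P.rk i (μ i)

/-- `μ` is non-wasteful: every desired school is filled to quota. -/
def NonWasteful (P : SchoolChoice I S) (μ : I → S) : Prop :=
  ∀ s : S, (∃ i : I, P.Desires μ i s) →
    (Finset.univ.filter fun i => μ i = s).card = P.quota s

/-- `μ` is stable: a non-wasteful matching with no priority violations. -/
def Stable (P : SchoolChoice I S) (μ : I → S) : Prop :=
  P.IsMatching μ ∧ P.NonWasteful μ ∧
    ¬ ∃ (i j : I) (s : S), P.Desires μ i s ∧ μ j = s ∧ P.prio s i < P.prio s j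

/-- `μ` Pareto-dominates `ν`. -/
def ParetoDominates (P : SchoolChoice I S) (μ ν : I → S) : Prop :=
  (∀ i : I, P.rk i (μ i) ≤ P.rk i (ν i)) ∧ ∃ i : I, P.rk i (μ i) < P.rk i (ν i)

/-- `μ` is a Pareto-efficient matching. -/
def ParetoEfficient (P : SchoolChoice I S) (μ : I → S) : Prop :=
  P.IsMatching μ ∧ ∀ ν : I → S, P.IsMatching ν → ¬ P.ParetoDominates ν μ

end SchoolChoice

section Aux

open Finset
open scoped Classical

variable {I S : Type} [Fintype I] [Fintype S] [DecidableEq I] [DecidableEq S]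

lemma aux_propose_mem (P : SchoolChoice I S) {R : I → Finset S} {j : I}
    (h : (Finset.univ \ R j).Nonempty) :
    P.propose R j ∈ Finset.univ \ R j := by
  unfold SchoolChoice.propose
  rw [dif_pos h]
  exact (Finset.exists_min_image _ _ h).choose_spec.1

lemma aux_propose_min (P : SchoolChoice I S) {R : I → Finset S} {j : I}
    (h : (Finset.univ \ R j).Nonempty) {t : S} (ht : t ∈ Finset.univ \ R j) :
    P.rk j (P.propose R j) ≤ P.rk j t := by
  unfold SchoolChoice.propose
  rw [dif_pos h]
  exact (Finset.exists_min_image _ _ h).choose_spec.2 t ht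

/-- If school `t` rejects someone at state `R`, then the set of students it
holds (applicants it does not reject) has size at least `quota t`. -/
lemma aux_held_ge (P : SchoolChoice I S) {R : I → Finset S} {t : S}
    (hrej : ∃ j, P.rejectsAt R t j) :
    P.quota t ≤ (Finset.univ.filter fun k =>
      P.propose R k = t ∧ ¬ P.rejectsAt R t k).card := by
  obtain ⟨j0, hj0⟩ := hrej
  have hne : (Finset.univ.filter fun k => P.rejectsAt R t k).Nonempty :=
    ⟨j0, by simp [hj0]⟩
  obtain ⟨j, hjmem, hjmin⟩ := Finset.exists_min_image _ (P.prio t) hne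
  rw [Finset.mem_filter] at hjmem
  refine hjmem.2.2.trans (Finset.card_le_card ?_)
  intro k hk
  simp only [Finset.mem_filter, Finset.mem_univ, true_and] at hk ⊢
  refine ⟨hk.1, fun hkr => ?_⟩
  have := hjmin k (by simp [hkr])
  exact absurd hk.2 (not_lt.mpr this)

/-- A held student keeps applying to the same school at the next round. -/
lemma aux_persist (P : SchoolChoice I S)
    (hne : ∀ (m : ℕ) (j : I), (Finset.univ \ P.daR m j).Nonempty)
    {n : ℕ} {t : S} {k : I}
    (h1 : P.propose (P.daR n) k = t) (h2 : ¬ P.rejectsAt (P.daR n) t k) :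
    P.propose (P.daR (n + 1)) k = t := by
  have htn : t ∉ P.daR n k := by
    have := aux_propose_mem P (hne n k)
    rw [h1] at this
    exact (Finset.mem_sdiff.mp this).2
  have htn1 : t ∉ P.daR (n + 1) k := by
    show t ∉ P.stepR (P.daR n) k
    unfold SchoolChoice.stepR
    simp only [Finset.mem_union, Finset.mem_filter, Finset.mem_univ, true_and]
    rintro (h | h)
    · exact htn h
    · exact h2 h
  have hm1 := aux_propose_mem P (hne (n + 1) k)
  have hsub : P.daR n k ⊆ P.daR (n + 1) k := Finset.subset_union_left
  have h1' : P.rk k t ≤ P.rk k (P.propose (P.daR (n + 1)) k) := by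
    rw [← h1]
    refine aux_propose_min P (hne n k) ?_
    rw [Finset.mem_sdiff] at hm1 ⊢
    exact ⟨hm1.1, fun hc => hm1.2 (hsub hc)⟩
  have h2' : P.rk k (P.propose (P.daR (n + 1)) k) ≤ P.rk k t :=
    aux_propose_min P (hne (n + 1) k) (Finset.mem_sdiff.mpr ⟨Finset.mem_univ _, htn1⟩)
  exact P.rk_inj k (le_antisymm h2' h1')

/-- Membership in a rejection set means the school rejected the student at some round. -/
lemma aux_mem_daR (P : SchoolChoice I S) :
    ∀ (n : ℕ) (j : I) (t : S), t ∈ P.daR n j → ∃ m, P.rejectsAt (P.daR m) t j := by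
  intro n
  induction n with
  | zero => intro j t h; simp [SchoolChoice.daR] at h
  | succ n ih =>
    intro j t h
    have h' : t ∈ P.daR n j ∪ (Finset.univ.filter fun u => P.rejectsAt (P.daR n) u j) := h
    rcases Finset.mem_union.mp h' with h | h
    · exact ih j t h
    · exact ⟨n, (Finset.mem_filter.mp h).2⟩

end Aux

/-- If student `i` is assigned under DA to a school `s = DA_i(P)`
that never rejects any applicant during the execution of DA, then `i` is
unimprovable: every stable-dominating matching `ν` satisfies `ν i = s`. -/
theorem no_rejection_unimprovable {I S : Type} [Fintype I] [Fintype S]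
    [DecidableEq I] [DecidableEq S] (P : SchoolChoice I S) (i : I) (s : S)
    (hs : P.DA i = s)
    (hnoreject : ∀ (n : ℕ) (j : I), ¬ P.rejectsAt (P.daR n) s j) :
    ∀ ν : I → S, P.StableDominating ν → ν i = s := by
  classical
  intro ν hν
  by_contra hcon
  set C := Fintype.card I * Fintype.card S with hC
  -- `s` never appears in a rejection set
  have hsR : ∀ (n : ℕ) (j : I), s ∉ P.daR n j := by
    intro n
    induction n with
    | zero => intro j; simp [SchoolChoice.daR]
    | succ n ih =>
      intro j hmem
      have h' : s ∈ P.daR n j ∪ (Finset.univ.filter fun u => P.rejectsAt (P.daR n) u j) := hmem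
      rcases Finset.mem_union.mp h' with h | h
      · exact ih j h
      · exact hnoreject n j (Finset.mem_filter.mp h).2
  have hnne : ∀ (n : ℕ) (j : I), (Finset.univ \ P.daR n j).Nonempty :=
    fun n j => ⟨s, Finset.mem_sdiff.mpr ⟨Finset.mem_univ _, hsR n j⟩⟩
  -- growth of rejection sets
  have hgrow : ∀ n : ℕ, P.daR (n + 1) ≠ P.daR n →
      (∑ j : I, (P.daR n j).card) + 1 ≤ ∑ j : I, (P.daR (n + 1) j).card := by
    intro n hne2
    have hsub : ∀ j, P.daR n j ⊆ P.daR (n + 1) j := fun j => Finset.subset_union_left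
    obtain ⟨j, hj⟩ : ∃ j, P.daR (n + 1) j ≠ P.daR n j := by
      by_contra h; push_neg at h; exact hne2 (funext h)
    have hlt : (P.daR n j).card < (P.daR (n + 1) j).card :=
      Finset.card_lt_card (lt_of_le_of_ne (hsub j) (Ne.symm hj))
    have := Finset.sum_lt_sum (s := Finset.univ)
      (f := fun j => (P.daR n j).card) (g := fun j => (P.daR (n + 1) j).card)
      (fun k _ => Finset.card_le_card (hsub k)) ⟨j, Finset.mem_univ j, hlt⟩
    exact Nat.succ_le_of_lt this
  have hbound : ∀ n : ℕ, (∑ j : I, (P.daR n j).card) ≤ C := by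
    intro n
    calc (∑ j : I, (P.daR n j).card) ≤ ∑ _j : I, Fintype.card S :=
          Finset.sum_le_sum fun j _ => Finset.card_le_univ _
      _ = C := by simp [hC, Finset.sum_const, mul_comm]
  -- a fixed point exists by round `C`
  obtain ⟨n0, hn0C, hfix0⟩ : ∃ n0 ≤ C, P.daR (n0 + 1) = P.daR n0 := by
    by_contra h
    push_neg at h
    have key : ∀ n, n ≤ C + 1 → n ≤ ∑ j : I, (P.daR n j).card := by
      intro n
      induction n with
      | zero => simp
      | succ n ih =>
        intro hn
        have h1 := ih (by omega)
        have h2 := hgrow n (h n (by omega))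
        omega
    have h1 := key (C + 1) le_rfl
    have h2 := hbound (C + 1)
    omega
  have hconst : ∀ k : ℕ, P.daR (n0 + k) = P.daR n0 := by
    intro k
    induction k with
    | zero => rfl
    | succ k ih =>
      show P.stepR (P.daR (n0 + k)) = P.daR n0
      rw [ih]
      exact hfix0
  set N := C + 1 with hN
  have hdaRN : P.daR N = P.daR n0 := by
    have := hconst (N - n0)
    rwa [Nat.add_sub_cancel' (by omega)] at this
  have hDA : P.DA = P.propose (P.daR N) := rfl
  -- no rejections at the final round
  have hnorejN : ∀ (t : S) (j : I), ¬ P.rejectsAt (P.daR N) t j := by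
    intro t j hr
    have hr0 : P.rejectsAt (P.daR n0) t j := by rwa [hdaRN] at hr
    have ht1 : t ∈ P.daR (n0 + 1) j := by
      show t ∈ P.daR n0 j ∪ (Finset.univ.filter fun u => P.rejectsAt (P.daR n0) u j)
      exact Finset.mem_union_right _ (Finset.mem_filter.mpr ⟨Finset.mem_univ _, hr0⟩)
    rw [hfix0] at ht1
    have hmem := aux_propose_mem P (hnne n0 j)
    rw [hr0.1] at hmem
    exact (Finset.mem_sdiff.mp hmem).2 ht1
  -- DA is a matching
  have hmatch : ∀ t : S,
      (Finset.univ.filter fun j => P.propose (P.daR N) j = t).card ≤ P.quota t := by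
    intro t
    by_contra hlt
    push_neg at hlt
    set Q := Finset.univ.filter fun j => P.propose (P.daR N) j = t with hQ
    have hQne : Q.Nonempty := Finset.card_pos.mp (by have := P.quota_pos t; omega)
    obtain ⟨j, hjQ, hjmax⟩ := Finset.exists_max_image Q (P.prio t) hQne
    apply hnorejN t j
    refine ⟨(Finset.mem_filter.mp hjQ).2, ?_⟩
    have hsub : Q.erase j ⊆ Finset.univ.filter fun k =>
        P.propose (P.daR N) k = t ∧ P.prio t k < P.prio t j := by
      intro k hk
      have hk1 := Finset.mem_of_mem_erase hk
      have hkne := Finset.ne_of_mem_erase hk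
      rw [hQ, Finset.mem_filter] at hk1
      simp only [Finset.mem_filter, Finset.mem_univ, true_and]
      refine ⟨hk1.2, lt_of_le_of_ne (hjmax k (Finset.mem_of_mem_erase hk)) ?_⟩
      exact fun he => hkne (P.prio_inj t he)
    have h1 : P.quota t ≤ (Q.erase j).card := by
      rw [Finset.card_erase_of_mem hjQ]; omega
    exact h1.trans (Finset.card_le_card hsub)
  -- schools that ever rejected are filled to quota at the end
  have hfull : ∀ t : S, (∃ (m : ℕ) (j : I), P.rejectsAt (P.daR m) t j) →
      P.quota t ≤ (Finset.univ.filter fun j => P.propose (P.daR N) j = t).card := by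
    rintro t ⟨m, j0, hm⟩
    obtain ⟨m', hm'le, hrej'⟩ : ∃ m' ≤ C, P.rejectsAt (P.daR m') t j0 := by
      rcases le_or_gt m n0 with h | h
      · exact ⟨m, le_trans h hn0C, hm⟩
      · refine ⟨n0, hn0C, ?_⟩
        have hd : P.daR m = P.daR n0 := by
          have := hconst (m - n0)
          rwa [Nat.add_sub_cancel' h.le] at this
        rwa [hd] at hm
    have hstep : ∀ n : ℕ,
        ((∃ k, P.rejectsAt (P.daR n) t k) ∨
          P.quota t ≤ (Finset.univ.filter fun k => P.propose (P.daR n) k = t).card) →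
        P.quota t ≤ (Finset.univ.filter fun k => P.propose (P.daR (n + 1)) k = t).card := by
      intro n hn
      by_cases hr : ∃ k, P.rejectsAt (P.daR n) t k
      · refine (aux_held_ge P hr).trans (Finset.card_le_card ?_)
        intro k hk
        simp only [Finset.mem_filter, Finset.mem_univ, true_and] at hk ⊢
        exact aux_persist P hnne hk.1 hk.2
      · push_neg at hr
        rcases hn with hn | hn
        · exact absurd hn (by push_neg; exact hr)
        · refine hn.trans (Finset.card_le_card ?_)
          intro k hk
          simp only [Finset.mem_filter, Finset.mem_univ, true_and] at hk ⊢
          exact aux_persist P hnne hk (hr k)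
    have hall : ∀ d : ℕ,
        P.quota t ≤ (Finset.univ.filter fun k => P.propose (P.daR (m' + 1 + d)) k = t).card := by
      intro d
      induction d with
      | zero => exact hstep m' (Or.inl ⟨j0, hrej'⟩)
      | succ d ih =>
        have := hstep (m' + 1 + d) (Or.inr ih)
        rwa [show m' + 1 + (d + 1) = m' + 1 + d + 1 by omega]
    have := hall (N - (m' + 1))
    rwa [Nat.add_sub_cancel' (by omega)] at this
  -- dominating assignments either agree with DA or lie in the rejection set
  have hdom := hν.2
  have hnuiF : ∀ j : I, ν j ≠ P.DA j → ν j ∈ P.daR N j := by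
    intro j hne3
    by_contra hnot
    have h1 : P.rk j (P.DA j) ≤ P.rk j (ν j) := by
      rw [hDA]
      exact aux_propose_min P (hnne N j) (Finset.mem_sdiff.mpr ⟨Finset.mem_univ _, hnot⟩)
    exact hne3 (P.rk_inj j (le_antisymm (hdom j) h1))
  -- the counting argument
  set F : Finset S := Finset.univ.filter
    (fun t => ∃ (m : ℕ) (j : I), P.rejectsAt (P.daR m) t j) with hF
  have hsF : s ∉ F := by
    simp only [hF, Finset.mem_filter, Finset.mem_univ, true_and, not_exists]
    exact fun m j => hnoreject m j
  have hfiber : ∀ t ∈ F, (Finset.univ.filter fun j => P.DA j = t).card = P.quota t := by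
    intro t ht
    rw [hDA]
    refine le_antisymm (hmatch t) (hfull t ?_)
    rw [hF, Finset.mem_filter] at ht
    exact ht.2
  set A := Finset.univ.filter (fun j => P.DA j ∈ F) with hA
  have hAcard : A.card = ∑ t ∈ F, P.quota t := by
    rw [Finset.card_eq_sum_card_fiberwise (f := P.DA) (s := A) (t := F)
      (fun j hj => (Finset.mem_filter.mp hj).2)]
    refine Finset.sum_congr rfl fun t ht => ?_
    rw [← hfiber t ht]
    congr 1
    ext j
    simp only [hA, Finset.mem_filter, Finset.mem_univ, true_and]
    constructor
    · exact fun h => h.2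
    · exact fun h => ⟨h ▸ ht, h⟩
  have hB : ∀ j ∈ insert i A, ν j ∈ F := by
    intro j hj
    have hmemF : ∀ k : I, ν k ∈ P.daR N k → ν k ∈ F := by
      intro k hk
      obtain ⟨m, hm⟩ := aux_mem_daR P N k (ν k) hk
      rw [hF, Finset.mem_filter]
      exact ⟨Finset.mem_univ _, m, k, hm⟩
    rcases Finset.mem_insert.mp hj with rfl | hjA
    · exact hmemF j (hnuiF j (by rw [hs]; exact hcon))
    · by_cases hcase : ν j = P.DA j
      · rw [hcase]; exact (Finset.mem_filter.mp hjA).2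
      · exact hmemF j (hnuiF j hcase)
  have hiA : i ∉ A := by
    rw [hA, Finset.mem_filter, hs]
    exact fun h => hsF h.2
  have hsub2 : insert i A ⊆ Finset.univ.filter fun j => ν j ∈ F := by
    intro j hj
    exact Finset.mem_filter.mpr ⟨Finset.mem_univ _, hB j hj⟩
  have hν1 : (Finset.univ.filter fun j => ν j ∈ F).card ≤ ∑ t ∈ F, P.quota t := by
    rw [Finset.card_eq_sum_card_fiberwise (f := ν) (s := Finset.univ.filter fun j => ν j ∈ F) (t := F)
      (fun j hj => (Finset.mem_filter.mp hj).2)]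
    refine Finset.sum_le_sum fun t ht => ?_
    refine le_trans (Finset.card_le_card ?_) (hν.1 t)
    intro j hj
    rw [Finset.mem_filter] at hj ⊢
    exact ⟨Finset.mem_univ _, hj.2⟩
  have hfin : A.card + 1 ≤ A.card := by
    calc A.card + 1 = (insert i A).card := (Finset.card_insert_of_notMem hiA).symm
      _ ≤ (Finset.univ.filter fun j => ν j ∈ F).card := Finset.card_le_card hsub2
      _ ≤ ∑ t ∈ F, P.quota t := hν1
      _ = A.card := hAcard.symm
  omega
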